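/- Let (k₁, k₂, k₃) = (3, 3, 3) and w = (x⁻³, (1/2)·x⁻², (1/2)·x⁻¹, (3/8)·x⁻², −(3/4)·x⁻³, (9/4)·x⁻⁴) (components in the order (a₁₂, a₁₃, a₂₃, b₁, b₂, b₃)). Then E″(w) ∈ B, F″(w) ∈ B, w ∉ B, and every z ∈ V with E″(z) ∈ B and F″(z) ∈ B satisfies z ∈ ℂ·w + B. In other words, the 𝔰″-invariant part of H¹(ℂℙ¹, T₂) is one-dimensional, spanned by the class of w. -/

import Mathlib

noncomputable section

open LaurentPolynomial

/-- `L = ℂ[x, x⁻¹]`, the Laurent polynomials over `ℂ`. -/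
abbrev L : Type := LaurentPolynomial ℂ

/-- The coefficient of `x^n` in a Laurent polynomial. -/
def coeffL (p : L) (n : ℤ) : ℂ := (AddMonoidAlgebra.coeff p : ℤ →₀ ℂ) n

lemma coeffL_zero (n : ℤ) : coeffL 0 n = 0 := rfl

lemma coeffL_add (a b : L) (n : ℤ) : coeffL (a + b) n = coeffL a n + coeffL b n := by
  unfold coeffL; erw [Finsupp.add_apply]; rfl

lemma coeffL_smul (c : ℂ) (a : L) (n : ℤ) : coeffL (c • a) n = c * coeffL a n := by
  unfold coeffL; erw [Finsupp.smul_apply]; rfl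

/-- `L₊`: Laurent polynomials involving only nonnegative powers of `x`. -/
def Lplus : Submodule ℂ L where
  carrier := {p | ∀ n : ℤ, n < 0 → coeffL p n = 0}
  zero_mem' := fun n _ => coeffL_zero n
  add_mem' := by intro a b ha hb n hn; rw [coeffL_add, ha n hn, hb n hn, add_zero]
  smul_mem' := by intro c p hp n hn; rw [coeffL_smul, hp n hn, mul_zero]

/-- `L₋`: Laurent polynomials involving only nonpositive powers of `x`. -/
def Lminus : Submodule ℂ L where
  carrier := {p | ∀ n : ℤ, 0 < n → coeffL p n = 0}
  zero_mem' := fun n _ => coeffL_zero n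
  add_mem' := by intro a b ha hb n hn; rw [coeffL_add, ha n hn, hb n hn, add_zero]
  smul_mem' := by intro c p hp n hn; rw [coeffL_smul, hp n hn, mul_zero]

/-- The derivative `d/dx` on Laurent polynomials. -/
def D (p : L) : L := Finsupp.sum (AddMonoidAlgebra.coeff p : ℤ →₀ ℂ) fun n a => ((n : ℂ) * a) • T (n - 1)

/-- `V = L⁶`, the model of Čech 1-cochains with values in `T₂`: a tuple
`v = (a₁₂, a₁₃, a₂₃, b₁, b₂, b₃)` (components `v 0, …, v 5`) encodes the
vector field `Σ_{i<j} a_{ij}(x)ξᵢξⱼ∂/∂x + Σ_t b_t(x)ξ₁ξ₂ξ₃∂/∂ξ_t` on `U₀ ∩ U₁`. -/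
abbrev V : Type := Fin 6 → L

/-- `B₀ = (L₊)⁶`: cochains holomorphic in `U₀`. -/
def B0 : Submodule ℂ V := Submodule.pi Set.univ fun _ => Lplus

/-- The linear map `v ↦ x^m · (v i)`. -/
def cndA (m : ℤ) (i : Fin 6) : V →ₗ[ℂ] L :=
  (LinearMap.mulLeft ℂ (T m)).comp (LinearMap.proj i)

/-- The linear map `v ↦ x^m · (v i − c·x⁻¹·(v j))`. -/
def cndB (m : ℤ) (c : ℂ) (i j : Fin 6) : V →ₗ[ℂ] L :=
  (LinearMap.mulLeft ℂ (T m)).comp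
    (LinearMap.proj i - c • (LinearMap.mulLeft ℂ (T (-1))).comp (LinearMap.proj j))

/-- `B₁`: cochains holomorphic in `U₁`, i.e. `v` with
`x^(kᵢ+kⱼ−2)·a_{ij} ∈ L₋` for all `i < j` and
`x^(d−k_t)·(b_t − σ_t·k_t·x⁻¹·a_{(t)}) ∈ L₋` for `t = 1, 2, 3`
(σ₁ = 1, σ₂ = −1, σ₃ = 1, a₍₁₎ = a₂₃, a₍₂₎ = a₁₃, a₍₃₎ = a₁₂, d = k₁+k₂+k₃). -/
def B1 (k1 k2 k3 : ℤ) : Submodule ℂ V :=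
  Lminus.comap (cndA (k1 + k2 - 2) 0) ⊓
  Lminus.comap (cndA (k1 + k3 - 2) 1) ⊓
  Lminus.comap (cndA (k2 + k3 - 2) 2) ⊓
  Lminus.comap (cndB (k2 + k3) ((k1 : ℂ)) 3 2) ⊓
  Lminus.comap (cndB (k1 + k3) (-(k2 : ℂ)) 4 1) ⊓
  Lminus.comap (cndB (k1 + k2) ((k3 : ℂ)) 5 0)

/-- The coboundary subspace `B = B₀ + B₁`. -/
def B (k1 k2 k3 : ℤ) : Submodule ℂ V := B0 ⊔ B1 k1 k2 k3

/-- Action of `e = ∂/∂x` on cocycles: the componentwise derivative. -/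
def Eop : V → V := fun v i => D (v i)

/-- Action of `f = ∂/∂y` on cocycles, with components
`a_{ij} ↦ (2 − kᵢ − kⱼ)·x·a_{ij} − x²·a_{ij}′` and
`b_t ↦ σ_t·k_t·a₍ₜ₎ − (d − k_t)·x·b_t − x²·b_t′`. -/
def Fop (k1 k2 k3 : ℤ) : V → V := fun v =>
  ![((2 - k1 - k2 : ℤ) : ℂ) • (T 1 * v 0) - T 2 * D (v 0),
    ((2 - k1 - k3 : ℤ) : ℂ) • (T 1 * v 1) - T 2 * D (v 1),
    ((2 - k2 - k3 : ℤ) : ℂ) • (T 1 * v 2) - T 2 * D (v 2),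
    (k1 : ℂ) • v 2 - ((k2 + k3 : ℤ) : ℂ) • (T 1 * v 3) - T 2 * D (v 3),
    -((k2 : ℂ) • v 1) - ((k1 + k3 : ℤ) : ℂ) • (T 1 * v 4) - T 2 * D (v 4),
    (k3 : ℂ) • v 0 - ((k1 + k2 : ℤ) : ℂ) • (T 1 * v 5) - T 2 * D (v 5)]

/-- `N(v) = (0, 0, a₁₃, −b₂, 0, 0)`; `e′ = ∂/∂x + ξ₂∂/∂ξ₁` acts by `E′ = E + N`. -/
def Nop : V → V := fun v => ![0, 0, v 1, -v 4, 0, 0]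

/-- `M(v) = (0, a₂₃, 0, 0, −b₁, 0)`; `f′ = ∂/∂y + η₁∂/∂η₂` acts by `F′ = F + M`. -/
def Mop : V → V := fun v => ![0, v 2, 0, 0, -v 3, 0]

/-- The action `E′ = E + N` of `e′ = ∂/∂x + ξ₂∂/∂ξ₁`. -/
def E'op : V → V := fun v => Eop v + Nop v

/-- The action `F′ = F + M` of `f′ = ∂/∂y + η₁∂/∂η₂`. -/
def F'op (k1 k2 k3 : ℤ) : V → V := fun v => Fop k1 k2 k3 v + Mop v

/-- `N″(v) = (0, a₁₂, a₁₃, −b₂, −b₃, 0)`;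
`e″ = ∂/∂x + ξ₂∂/∂ξ₁ + ξ₃∂/∂ξ₂` acts by `E″ = E + N″`. -/
def N''op : V → V := fun v => ![0, v 0, v 1, -v 4, -v 5, 0]

/-- `M″(v) = (2a₁₃, 2a₂₃, 0, 0, −2b₁, −2b₂)`;
`f″ = ∂/∂y + 2η₁∂/∂η₂ + 2η₂∂/∂η₃` acts by `F″ = F + M″`. -/
def M''op : V → V := fun v => ![(2 : ℂ) • v 1, (2 : ℂ) • v 2, 0, 0, -((2 : ℂ) • v 3), -((2 : ℂ) • v 4)]

/-- The action `E″ = E + N″` of `e″`. -/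
def E''op : V → V := fun v => Eop v + N''op v

/-- The action `F″ = F + M″` of `f″`. -/
def F''op (k1 k2 k3 : ℤ) : V → V := fun v => Fop k1 k2 k3 v + M''op v

lemma coeffL_neg (a : L) (n : ℤ) : coeffL (-a) n = -coeffL a n := by
  unfold coeffL; erw [Finsupp.neg_apply]; rfl

lemma coeffL_sub (a b : L) (n : ℤ) : coeffL (a - b) n = coeffL a n - coeffL b n := by
  rw [sub_eq_add_neg, coeffL_add, coeffL_neg]; ring

lemma coeffL_T (m n : ℤ) : coeffL (T m) n = if m = n then 1 else 0 := by
  unfold coeffL T; erw [Finsupp.single_apply]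

lemma coeffL_T_mul (m : ℤ) (p : L) (n : ℤ) : coeffL (T m * p) n = coeffL p (n - m) := by
  unfold coeffL T
  erw [AddMonoidAlgebra.coeff_single_mul_apply]
  rw [one_mul]; congr 1; ring

lemma coeffL_D (p : L) (n : ℤ) : coeffL (D p) n = ((n + 1 : ℤ) : ℂ) * coeffL p (n + 1) := by
  unfold coeffL D
  erw [AddMonoidAlgebra.coeff_finsuppSum, Finsupp.sum_apply]
  rw [Finsupp.sum]
  by_cases h : n + 1 ∈ (AddMonoidAlgebra.coeff p : ℤ →₀ ℂ).support
  · rw [Finset.sum_eq_single (n+1)]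
    · erw [Finsupp.smul_apply]
      rw [show (n+1) - 1 = n by ring]
      unfold T
      erw [Finsupp.single_apply]
      simp
    · intro b _ hb
      erw [Finsupp.smul_apply]
      unfold T
      erw [Finsupp.single_apply]
      rw [if_neg (by omega)]
      simp
    · intro h'; exact absurd h h'
  · rw [Finsupp.notMem_support_iff.mp h, mul_zero]
    apply Finset.sum_eq_zero
    intro b hb
    erw [Finsupp.smul_apply]
    unfold T
    erw [Finsupp.single_apply]
    rw [if_neg (by intro hh; exact h (by rwa [show b = n+1 by omega] at hb))]
    simp

lemma mem_Lplus_iff (p : L) : p ∈ Lplus ↔ ∀ n : ℤ, n < 0 → coeffL p n = 0 := Iff.rfl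
lemma mem_Lminus_iff (p : L) : p ∈ Lminus ↔ ∀ n : ℤ, 0 < n → coeffL p n = 0 := Iff.rfl

lemma mem_Lminus_shiftA (p : L) (m : ℤ) :
    (T m * p ∈ Lminus) ↔ ∀ n : ℤ, -m < n → coeffL p n = 0 := by
  rw [mem_Lminus_iff]
  constructor
  · intro h n hn
    have := h (n + m) (by omega)
    rwa [coeffL_T_mul, add_sub_cancel_right] at this
  · intro h n hn
    rw [coeffL_T_mul]
    exact h _ (by omega)

lemma mem_Lminus_shiftB (p q : L) (m : ℤ) (c : ℂ) :
    (T m * (p - c • (T (-1) * q)) ∈ Lminus) ↔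
      ∀ n : ℤ, -m < n → coeffL p n = c * coeffL q (n + 1) := by
  rw [mem_Lminus_iff]
  constructor
  · intro h n hn
    have := h (n + m) (by omega)
    rw [coeffL_T_mul, add_sub_cancel_right, coeffL_sub, coeffL_smul, coeffL_T_mul,
      sub_neg_eq_add, sub_eq_zero] at this
    exact this
  · intro h n hn
    rw [coeffL_T_mul, coeffL_sub, coeffL_smul, coeffL_T_mul, sub_neg_eq_add, sub_eq_zero]
    exact h _ (by omega)

lemma mem_B1_iff (v : V) : v ∈ B1 3 3 3 ↔
    ((∀ n : ℤ, -3 ≤ n → coeffL (v 0) n = 0) ∧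
     (∀ n : ℤ, -3 ≤ n → coeffL (v 1) n = 0) ∧
     (∀ n : ℤ, -3 ≤ n → coeffL (v 2) n = 0) ∧
     (∀ n : ℤ, -5 ≤ n → coeffL (v 3) n = 3 * coeffL (v 2) (n + 1)) ∧
     (∀ n : ℤ, -5 ≤ n → coeffL (v 4) n = -3 * coeffL (v 1) (n + 1)) ∧
     (∀ n : ℤ, -5 ≤ n → coeffL (v 5) n = 3 * coeffL (v 0) (n + 1))) := by
  have hA : ∀ (m : ℤ) (i : Fin 6), v ∈ Lminus.comap (cndA m i) ↔
      ∀ n : ℤ, -m < n → coeffL (v i) n = 0 := by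
    intro m i
    rw [Submodule.mem_comap]
    exact mem_Lminus_shiftA (v i) m
  have hB : ∀ (m : ℤ) (c : ℂ) (i j : Fin 6), v ∈ Lminus.comap (cndB m c i j) ↔
      ∀ n : ℤ, -m < n → coeffL (v i) n = c * coeffL (v j) (n + 1) := by
    intro m c i j
    rw [Submodule.mem_comap]
    exact mem_Lminus_shiftB (v i) (v j) m c
  show v ∈ (_ ⊓ _ ⊓ _ ⊓ _ ⊓ _ ⊓ _ : Submodule ℂ V) ↔ _
  simp only [Submodule.mem_inf, hA, hB]
  norm_num
  constructor
  · rintro ⟨⟨⟨⟨⟨h1, h2⟩, h3⟩, h4⟩, h5⟩, h6⟩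
    exact ⟨fun n hn => h1 n (by omega), fun n hn => h2 n (by omega), fun n hn => h3 n (by omega),
      fun n hn => h4 n (by omega), fun n hn => h5 n (by omega), fun n hn => h6 n (by omega)⟩
  · rintro ⟨h1, h2, h3, h4, h5, h6⟩
    exact ⟨⟨⟨⟨⟨fun n hn => h1 n (by omega), fun n hn => h2 n (by omega)⟩,
      fun n hn => h3 n (by omega)⟩, fun n hn => h4 n (by omega)⟩,
      fun n hn => h5 n (by omega)⟩, fun n hn => h6 n (by omega)⟩

def pPart (p : L) : L := AddMonoidAlgebra.ofCoeff (Finsupp.filter (fun n => 0 ≤ n) (AddMonoidAlgebra.coeff p : ℤ →₀ ℂ))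

lemma coeffL_pPart (p : L) (n : ℤ) :
    coeffL (pPart p) n = if 0 ≤ n then coeffL p n else 0 := by
  unfold coeffL pPart
  erw [Finsupp.filter_apply]

lemma mem_B_iff (v : V) : v ∈ B 3 3 3 ↔
    ((∀ n : ℤ, -3 ≤ n → n < 0 → coeffL (v 0) n = 0) ∧
     (∀ n : ℤ, -3 ≤ n → n < 0 → coeffL (v 1) n = 0) ∧
     (∀ n : ℤ, -3 ≤ n → n < 0 → coeffL (v 2) n = 0) ∧
     (∀ n : ℤ, -4 ≤ n → n < 0 → coeffL (v 3) n = 0) ∧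
     (∀ n : ℤ, -4 ≤ n → n < 0 → coeffL (v 4) n = 0) ∧
     (∀ n : ℤ, -4 ≤ n → n < 0 → coeffL (v 5) n = 0) ∧
     coeffL (v 3) (-5) = 3 * coeffL (v 2) (-4) ∧
     coeffL (v 4) (-5) = -3 * coeffL (v 1) (-4) ∧
     coeffL (v 5) (-5) = 3 * coeffL (v 0) (-4)) := by
  constructor
  · intro h
    rcases Submodule.mem_sup.mp h with ⟨x, hx, y, hy, hv⟩
    have hxc : ∀ (i : Fin 6) (n : ℤ), n < 0 → coeffL (x i) n = 0 := by
      intro i n hn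
      exact (Submodule.mem_pi.mp hx) i (Set.mem_univ i) n hn
    rw [mem_B1_iff] at hy
    obtain ⟨h0, h1, h2, h3, h4, h5⟩ := hy
    have hvc : ∀ (i : Fin 6) (n : ℤ), coeffL (v i) n = coeffL (x i) n + coeffL (y i) n := by
      intro i n; rw [← hv]; exact coeffL_add _ _ n
    refine ⟨?_, ?_, ?_, ?_, ?_, ?_, ?_, ?_, ?_⟩
    · intro n h1' h2'; rw [hvc, hxc _ _ h2', h0 n h1', add_zero]
    · intro n h1' h2'; rw [hvc, hxc _ _ h2', h1 n h1', add_zero]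
    · intro n h1' h2'; rw [hvc, hxc _ _ h2', h2 n h1', add_zero]
    · intro n h1' h2'
      rw [hvc, hxc _ _ h2', h3 n (by omega), h2 (n+1) (by omega), zero_add, mul_zero]
    · intro n h1' h2'
      rw [hvc, hxc _ _ h2', h4 n (by omega), h1 (n+1) (by omega), zero_add, mul_zero]
    · intro n h1' h2'
      rw [hvc, hxc _ _ h2', h5 n (by omega), h0 (n+1) (by omega), zero_add, mul_zero]
    · rw [hvc, hvc, hxc 3 (-5) (by omega), hxc 2 (-4) (by omega), zero_add, zero_add,
        h3 (-5) (by omega)]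
      norm_num
    · rw [hvc, hvc, hxc 4 (-5) (by omega), hxc 1 (-4) (by omega), zero_add, zero_add,
        h4 (-5) (by omega)]
      norm_num
    · rw [hvc, hvc, hxc 5 (-5) (by omega), hxc 0 (-4) (by omega), zero_add, zero_add,
        h5 (-5) (by omega)]
      norm_num
  · rintro ⟨h0, h1, h2, h3, h4, h5, c1, c2, c3⟩
    apply Submodule.mem_sup.mpr
    refine ⟨fun i => pPart (v i), ?_, v - fun i => pPart (v i), ?_, by abel⟩
    · apply Submodule.mem_pi.mpr
      intro i _
      rw [mem_Lplus_iff]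
      intro n hn
      rw [coeffL_pPart, if_neg (by omega)]
    · have hyc : ∀ (i : Fin 6) (n : ℤ),
          coeffL ((v - fun i => pPart (v i)) i) n =
            if n < 0 then coeffL (v i) n else 0 := by
        intro i n
        have : (v - fun i => pPart (v i)) i = v i - pPart (v i) := rfl
        rw [this, coeffL_sub, coeffL_pPart]
        split_ifs with h1' h2' <;> first | omega | ring
      rw [mem_B1_iff]
      refine ⟨?_, ?_, ?_, ?_, ?_, ?_⟩
      · intro n hn; rw [hyc]; split_ifs with hh
        · exact h0 n hn hh
        · rfl
      · intro n hn; rw [hyc]; split_ifs with hh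
        · exact h1 n hn hh
        · rfl
      · intro n hn; rw [hyc]; split_ifs with hh
        · exact h2 n hn hh
        · rfl
      · intro n hn; rw [hyc, hyc]; split_ifs with hh hh2
        · rcases eq_or_lt_of_le hn with rfl | hlt
          · norm_num at hh2 ⊢; exact c1
          · rw [h3 n (by omega) hh, h2 (n+1) (by omega) hh2, mul_zero]
        · rw [h3 n (by omega) hh, mul_zero]
        · omega
        · rw [mul_zero]
      · intro n hn; rw [hyc, hyc]; split_ifs with hh hh2
        · rcases eq_or_lt_of_le hn with rfl | hlt
          · norm_num at hh2 ⊢; rw [c2]; ring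
          · rw [h4 n (by omega) hh, h1 (n+1) (by omega) hh2, mul_zero]
        · rw [h4 n (by omega) hh, mul_zero]
        · omega
        · rw [mul_zero]
      · intro n hn; rw [hyc, hyc]; split_ifs with hh hh2
        · rcases eq_or_lt_of_le hn with rfl | hlt
          · norm_num at hh2 ⊢; exact c3
          · rw [h5 n (by omega) hh, h0 (n+1) (by omega) hh2, mul_zero]
        · rw [h5 n (by omega) hh, mul_zero]
        · omega
        · rw [mul_zero]

section coeffops
variable (z : V) (n : ℤ)

lemma coeffE0 : coeffL (E''op z 0) n = ((n+1 : ℤ) : ℂ) * coeffL (z 0) (n+1) := by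
  have h : E''op z 0 = D (z 0) + 0 := rfl
  rw [h, coeffL_add, coeffL_zero, coeffL_D, add_zero]

lemma coeffE1 : coeffL (E''op z 1) n = ((n+1 : ℤ) : ℂ) * coeffL (z 1) (n+1) + coeffL (z 0) n := by
  have h : E''op z 1 = D (z 1) + z 0 := rfl
  rw [h, coeffL_add, coeffL_D]

lemma coeffE2 : coeffL (E''op z 2) n = ((n+1 : ℤ) : ℂ) * coeffL (z 2) (n+1) + coeffL (z 1) n := by
  have h : E''op z 2 = D (z 2) + z 1 := rfl
  rw [h, coeffL_add, coeffL_D]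

lemma coeffE3 : coeffL (E''op z 3) n = ((n+1 : ℤ) : ℂ) * coeffL (z 3) (n+1) - coeffL (z 4) n := by
  have h : E''op z 3 = D (z 3) + -(z 4) := rfl
  rw [h, coeffL_add, coeffL_neg, coeffL_D]; ring

lemma coeffE4 : coeffL (E''op z 4) n = ((n+1 : ℤ) : ℂ) * coeffL (z 4) (n+1) - coeffL (z 5) n := by
  have h : E''op z 4 = D (z 4) + -(z 5) := rfl
  rw [h, coeffL_add, coeffL_neg, coeffL_D]; ring

lemma coeffE5 : coeffL (E''op z 5) n = ((n+1 : ℤ) : ℂ) * coeffL (z 5) (n+1) := by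
  have h : E''op z 5 = D (z 5) + 0 := rfl
  rw [h, coeffL_add, coeffL_zero, coeffL_D, add_zero]

lemma coeffF0 : coeffL (F''op 3 3 3 z 0) n
    = -((n+3 : ℤ) : ℂ) * coeffL (z 0) (n-1) + 2 * coeffL (z 1) n := by
  have h : F''op 3 3 3 z 0
      = ((2 - 3 - 3 : ℤ) : ℂ) • (T 1 * z 0) - T 2 * D (z 0) + (2:ℂ) • z 1 := rfl
  rw [h, coeffL_add, coeffL_sub, coeffL_smul, coeffL_smul, coeffL_T_mul, coeffL_T_mul, coeffL_D,
    show n - 2 + 1 = n - 1 by ring]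
  push_cast; ring

lemma coeffF1 : coeffL (F''op 3 3 3 z 1) n
    = -((n+3 : ℤ) : ℂ) * coeffL (z 1) (n-1) + 2 * coeffL (z 2) n := by
  have h : F''op 3 3 3 z 1
      = ((2 - 3 - 3 : ℤ) : ℂ) • (T 1 * z 1) - T 2 * D (z 1) + (2:ℂ) • z 2 := rfl
  rw [h, coeffL_add, coeffL_sub, coeffL_smul, coeffL_smul, coeffL_T_mul, coeffL_T_mul, coeffL_D,
    show n - 2 + 1 = n - 1 by ring]
  push_cast; ring

lemma coeffF2 : coeffL (F''op 3 3 3 z 2) n = -((n+3 : ℤ) : ℂ) * coeffL (z 2) (n-1) := by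
  have h : F''op 3 3 3 z 2
      = ((2 - 3 - 3 : ℤ) : ℂ) • (T 1 * z 2) - T 2 * D (z 2) + 0 := rfl
  rw [h, coeffL_add, coeffL_zero, coeffL_sub, coeffL_smul, coeffL_T_mul, coeffL_T_mul, coeffL_D,
    show n - 2 + 1 = n - 1 by ring]
  push_cast; ring

lemma coeffF3 : coeffL (F''op 3 3 3 z 3) n
    = 3 * coeffL (z 2) n - ((n+5 : ℤ) : ℂ) * coeffL (z 3) (n-1) := by
  have h : F''op 3 3 3 z 3
      = ((3:ℤ) : ℂ) • z 2 - ((3 + 3 : ℤ) : ℂ) • (T 1 * z 3) - T 2 * D (z 3) + 0 := rfl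
  rw [h, coeffL_add, coeffL_zero, coeffL_sub, coeffL_sub, coeffL_smul, coeffL_smul,
    coeffL_T_mul, coeffL_T_mul, coeffL_D, show n - 2 + 1 = n - 1 by ring]
  push_cast; ring

lemma coeffF4 : coeffL (F''op 3 3 3 z 4) n
    = -3 * coeffL (z 1) n - ((n+5 : ℤ) : ℂ) * coeffL (z 4) (n-1) - 2 * coeffL (z 3) n := by
  have h : F''op 3 3 3 z 4
      = -(((3:ℤ) : ℂ) • z 1) - ((3 + 3 : ℤ) : ℂ) • (T 1 * z 4) - T 2 * D (z 4)
        + -((2:ℂ) • z 3) := rfl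
  rw [h, coeffL_add, coeffL_neg, coeffL_sub, coeffL_sub, coeffL_neg, coeffL_smul, coeffL_smul,
    coeffL_smul, coeffL_T_mul, coeffL_T_mul, coeffL_D, show n - 2 + 1 = n - 1 by ring]
  push_cast; ring

lemma coeffF5 : coeffL (F''op 3 3 3 z 5) n
    = 3 * coeffL (z 0) n - ((n+5 : ℤ) : ℂ) * coeffL (z 5) (n-1) - 2 * coeffL (z 4) n := by
  have h : F''op 3 3 3 z 5
      = ((3:ℤ) : ℂ) • z 0 - ((3 + 3 : ℤ) : ℂ) • (T 1 * z 5) - T 2 * D (z 5)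
        + -((2:ℂ) • z 4) := rfl
  rw [h, coeffL_add, coeffL_neg, coeffL_sub, coeffL_sub, coeffL_smul, coeffL_smul,
    coeffL_smul, coeffL_T_mul, coeffL_T_mul, coeffL_D, show n - 2 + 1 = n - 1 by ring]
  push_cast; ring

end coeffops

/-- For `(k₁, k₂, k₃) = (3, 3, 3)`, the 𝔰″-invariant part of `H¹(ℂℙ¹, T₂)` is
one-dimensional, spanned by the class of
`w = (x⁻³, (1/2)x⁻², (1/2)x⁻¹, (3/8)x⁻², −(3/4)x⁻³, (9/4)x⁻⁴)`. -/
theorem stmt_12 (w : V)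
    (hw : w = ![T (-3), (1 / 2 : ℂ) • T (-2), (1 / 2 : ℂ) • T (-1),
      (3 / 8 : ℂ) • T (-2), -((3 / 4 : ℂ) • T (-3)), (9 / 4 : ℂ) • T (-4)]) :
    E''op w ∈ B 3 3 3 ∧ F''op 3 3 3 w ∈ B 3 3 3 ∧ w ∉ B 3 3 3 ∧
    ∀ z : V, E''op z ∈ B 3 3 3 → F''op 3 3 3 z ∈ B 3 3 3 →
      ∃ c : ℂ, z - c • w ∈ B 3 3 3 := by
  have w0 : w 0 = T (-3) := by rw [hw]; rfl
  have w1 : w 1 = (1 / 2 : ℂ) • T (-2) := by rw [hw]; rfl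
  have w2 : w 2 = (1 / 2 : ℂ) • T (-1) := by rw [hw]; rfl
  have w3 : w 3 = (3 / 8 : ℂ) • T (-2) := by rw [hw]; rfl
  have w4 : w 4 = -((3 / 4 : ℂ) • T (-3)) := by rw [hw]; rfl
  have w5 : w 5 = (9 / 4 : ℂ) • T (-4) := by rw [hw]; rfl
  have cw0 : ∀ n : ℤ, coeffL (w 0) n = if (-3 : ℤ) = n then 1 else 0 := by
    intro n; rw [w0, coeffL_T]
  have cw1 : ∀ n : ℤ, coeffL (w 1) n = (1/2) * (if (-2 : ℤ) = n then 1 else 0) := by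
    intro n; rw [w1, coeffL_smul, coeffL_T]
  have cw2 : ∀ n : ℤ, coeffL (w 2) n = (1/2) * (if (-1 : ℤ) = n then 1 else 0) := by
    intro n; rw [w2, coeffL_smul, coeffL_T]
  have cw3 : ∀ n : ℤ, coeffL (w 3) n = (3/8) * (if (-2 : ℤ) = n then 1 else 0) := by
    intro n; rw [w3, coeffL_smul, coeffL_T]
  have cw4 : ∀ n : ℤ, coeffL (w 4) n = -((3/4) * (if (-3 : ℤ) = n then 1 else 0)) := by
    intro n; rw [w4, coeffL_neg, coeffL_smul, coeffL_T]
  have cw5 : ∀ n : ℤ, coeffL (w 5) n = (9/4) * (if (-4 : ℤ) = n then 1 else 0) := by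
    intro n; rw [w5, coeffL_smul, coeffL_T]
  refine ⟨?_, ?_, ?_, ?_⟩
  · -- E''op w ∈ B
    rw [mem_B_iff]
    refine ⟨?_, ?_, ?_, ?_, ?_, ?_, ?_, ?_, ?_⟩
    · intro n h1 h2; rw [coeffE0]; simp only [cw0]; interval_cases n <;> norm_num
    · intro n h1 h2; rw [coeffE1]; simp only [cw1, cw0]; interval_cases n <;> norm_num
    · intro n h1 h2; rw [coeffE2]; simp only [cw2, cw1]; interval_cases n <;> norm_num
    · intro n h1 h2; rw [coeffE3]; simp only [cw3, cw4]; interval_cases n <;> norm_num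
    · intro n h1 h2; rw [coeffE4]; simp only [cw4, cw5]; interval_cases n <;> norm_num
    · intro n h1 h2; rw [coeffE5]; simp only [cw5]; interval_cases n <;> norm_num
    · rw [coeffE3, coeffE2]; simp only [cw3, cw4, cw2, cw1]; norm_num
    · rw [coeffE4, coeffE1]; simp only [cw4, cw5, cw1, cw0]; norm_num
    · rw [coeffE5, coeffE0]; simp only [cw5, cw0]; norm_num
  · -- F''op w ∈ B
    rw [mem_B_iff]
    refine ⟨?_, ?_, ?_, ?_, ?_, ?_, ?_, ?_, ?_⟩
    · intro n h1 h2; rw [coeffF0]; simp only [cw0, cw1]; interval_cases n <;> norm_num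
    · intro n h1 h2; rw [coeffF1]; simp only [cw1, cw2]; interval_cases n <;> norm_num
    · intro n h1 h2; rw [coeffF2]; simp only [cw2]; interval_cases n <;> norm_num
    · intro n h1 h2; rw [coeffF3]; simp only [cw2, cw3]; interval_cases n <;> norm_num
    · intro n h1 h2; rw [coeffF4]; simp only [cw1, cw4, cw3]; interval_cases n <;> norm_num
    · intro n h1 h2; rw [coeffF5]; simp only [cw0, cw5, cw4]; interval_cases n <;> norm_num
    · rw [coeffF3, coeffF2]; simp only [cw2, cw3]; norm_num
    · rw [coeffF4, coeffF1]; simp only [cw1, cw4, cw3, cw2]; norm_num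
    · rw [coeffF5, coeffF0]; simp only [cw0, cw5, cw4, cw1]; norm_num
  · -- w ∉ B
    intro h
    have := ((mem_B_iff w).mp h).1 (-3) (by norm_num) (by norm_num)
    rw [cw0] at this
    norm_num at this
  · -- main statement
    intro z hEz hFz
    rw [mem_B_iff] at hEz hFz
    obtain ⟨hE1, hE2, hE3, hE4, hE5, hE6, hEx1, hEx2, hEx3⟩ := hEz
    obtain ⟨hF1, hF2, hF3, hF4, hF5, hF6, hFx1, hFx2, hFx3⟩ := hFz
    -- extract clean coefficient equations
    have hA2 : coeffL (z 0) (-2) = 0 := by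
      have r := hE1 (-3) (by norm_num) (by norm_num)
      rw [coeffE0, show (-3 : ℤ) + 1 = -2 from by norm_num] at r
      linear_combination (norm := (push_cast; ring1)) (-1/2 : ℂ) * r
    have hA1 : coeffL (z 0) (-1) = 0 := by
      have r := hE1 (-2) (by norm_num) (by norm_num)
      rw [coeffE0, show (-2 : ℤ) + 1 = -1 from by norm_num] at r
      linear_combination (norm := (push_cast; ring1)) (-1 : ℂ) * r
    have hB3 : coeffL (z 1) (-3) = 0 := by
      have r := hF1 (-3) (by norm_num) (by norm_num)
      rw [coeffF0, show (-3 : ℤ) - 1 = -4 from by norm_num] at r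
      linear_combination (norm := (push_cast; ring1)) (1/2 : ℂ) * r
    have hA3 : coeffL (z 0) (-3) = 2 * coeffL (z 1) (-2) := by
      have r := hF1 (-2) (by norm_num) (by norm_num)
      rw [coeffF0, show (-2 : ℤ) - 1 = -3 from by norm_num] at r
      linear_combination (norm := (push_cast; ring1)) (-1 : ℂ) * r
    have hB1 : coeffL (z 1) (-1) = 0 := by
      have r := hE3 (-1) (by norm_num) (by norm_num)
      rw [coeffE2, show (-1 : ℤ) + 1 = 0 from by norm_num] at r
      linear_combination (norm := (push_cast; ring1)) r
    have hC3 : coeffL (z 2) (-3) = 0 := by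
      have r := hF2 (-3) (by norm_num) (by norm_num)
      rw [coeffF1, show (-3 : ℤ) - 1 = -4 from by norm_num] at r
      linear_combination (norm := (push_cast; ring1)) (1/2 : ℂ) * r
    have hC2 : coeffL (z 2) (-2) = 0 := by
      have r := hF2 (-2) (by norm_num) (by norm_num)
      rw [coeffF1, show (-2 : ℤ) - 1 = -3 from by norm_num] at r
      linear_combination (norm := (push_cast; ring1)) (1/2 : ℂ) * r + (1/2 : ℂ) * hB3
    have hC1 : coeffL (z 2) (-1) = coeffL (z 1) (-2) := by
      have r := hF2 (-1) (by norm_num) (by norm_num)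
      rw [coeffF1, show (-1 : ℤ) - 1 = -2 from by norm_num] at r
      linear_combination (norm := (push_cast; ring1)) (1/2 : ℂ) * r
    have hP4 : coeffL (z 3) (-4) = 0 := by
      have r := hF4 (-3) (by norm_num) (by norm_num)
      rw [coeffF3, show (-3 : ℤ) - 1 = -4 from by norm_num] at r
      linear_combination (norm := (push_cast; ring1)) (-1/2 : ℂ) * r + (3/2 : ℂ) * hC3
    have hP3 : coeffL (z 3) (-3) = 0 := by
      have r := hF4 (-2) (by norm_num) (by norm_num)
      rw [coeffF3, show (-2 : ℤ) - 1 = -3 from by norm_num] at r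
      linear_combination (norm := (push_cast; ring1)) (-1/3 : ℂ) * r + hC2
    have hP2 : coeffL (z 3) (-2) = (3/4) * coeffL (z 1) (-2) := by
      have r := hF4 (-1) (by norm_num) (by norm_num)
      rw [coeffF3, show (-1 : ℤ) - 1 = -2 from by norm_num] at r
      linear_combination (norm := (push_cast; ring1)) (-1/4 : ℂ) * r + (3/4 : ℂ) * hC1
    have hQ1 : coeffL (z 4) (-1) = 0 := by
      have r := hE4 (-1) (by norm_num) (by norm_num)
      rw [coeffE3, show (-1 : ℤ) + 1 = 0 from by norm_num] at r
      linear_combination (norm := (push_cast; ring1)) (-1 : ℂ) * r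
    have rE4b := hE4 (-2) (by norm_num) (by norm_num)
    rw [coeffE3, show (-2 : ℤ) + 1 = -1 from by norm_num] at rE4b
    have rF5a := hF5 (-1) (by norm_num) (by norm_num)
    rw [coeffF4, show (-1 : ℤ) - 1 = -2 from by norm_num] at rF5a
    have hQ2 : coeffL (z 4) (-2) = 0 := by
      linear_combination (norm := (push_cast; ring1))
        (-1/2 : ℂ) * rF5a + rE4b - (3/2 : ℂ) * hB1
    have hP1 : coeffL (z 3) (-1) = 0 := by
      linear_combination (norm := (push_cast; ring1)) (-1 : ℂ) * rE4b - hQ2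
    have hQ3 : coeffL (z 4) (-3) = -(3/2) * coeffL (z 1) (-2) := by
      have r := hE4 (-3) (by norm_num) (by norm_num)
      rw [coeffE3, show (-3 : ℤ) + 1 = -2 from by norm_num] at r
      linear_combination (norm := (push_cast; ring1)) (-1 : ℂ) * r - 2 * hP2
    have hQ4 : coeffL (z 4) (-4) = 0 := by
      have r := hF5 (-3) (by norm_num) (by norm_num)
      rw [coeffF4, show (-3 : ℤ) - 1 = -4 from by norm_num] at r
      linear_combination (norm := (push_cast; ring1))
        (-1/2 : ℂ) * r - (3/2 : ℂ) * hB3 - hP3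
    have hR1 : coeffL (z 5) (-1) = 0 := by
      have r := hE5 (-1) (by norm_num) (by norm_num)
      rw [coeffE4, show (-1 : ℤ) + 1 = 0 from by norm_num] at r
      linear_combination (norm := (push_cast; ring1)) (-1 : ℂ) * r
    have hR2 : coeffL (z 5) (-2) = 0 := by
      have r := hE6 (-3) (by norm_num) (by norm_num)
      rw [coeffE5, show (-3 : ℤ) + 1 = -2 from by norm_num] at r
      linear_combination (norm := (push_cast; ring1)) (-1/2 : ℂ) * r
    have hR3 : coeffL (z 5) (-3) = 0 := by
      have r := hE6 (-4) (by norm_num) (by norm_num)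
      rw [coeffE5, show (-4 : ℤ) + 1 = -3 from by norm_num] at r
      linear_combination (norm := (push_cast; ring1)) (-1/3 : ℂ) * r
    have hR4 : coeffL (z 5) (-4) = (9/2) * coeffL (z 1) (-2) := by
      have r := hEx3
      rw [coeffE5, coeffE0, show (-5 : ℤ) + 1 = -4 from by norm_num,
        show (-4 : ℤ) + 1 = -3 from by norm_num] at r
      linear_combination (norm := (push_cast; ring1)) (-1/4 : ℂ) * r + (9/4 : ℂ) * hA3
    have hP5 : coeffL (z 3) (-5) = 3 * coeffL (z 2) (-4) := by
      have r := hF4 (-4) (by norm_num) (by norm_num)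
      rw [coeffF3, show (-4 : ℤ) - 1 = -5 from by norm_num] at r
      linear_combination (norm := (push_cast; ring1)) (-1 : ℂ) * r
    have hQ5 : coeffL (z 4) (-5) = -3 * coeffL (z 1) (-4) := by
      have r := hFx3
      rw [coeffF5, coeffF0, show (-5 : ℤ) - 1 = -6 from by norm_num,
        show (-4 : ℤ) - 1 = -5 from by norm_num] at r
      linear_combination (norm := (push_cast; ring1)) (-1/2 : ℂ) * r
    have hR5 : coeffL (z 5) (-5) = 3 * coeffL (z 0) (-4) := by
      have r := hF6 (-4) (by norm_num) (by norm_num)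
      rw [coeffF5, show (-4 : ℤ) - 1 = -5 from by norm_num] at r
      linear_combination (norm := (push_cast; ring1)) (-1 : ℂ) * r - 2 * hQ4
    -- conclude
    refine ⟨2 * coeffL (z 1) (-2), ?_⟩
    rw [mem_B_iff]
    have hsub : ∀ (i : Fin 6) (n : ℤ),
        coeffL ((z - (2 * coeffL (z 1) (-2)) • w) i) n
          = coeffL (z i) n - (2 * coeffL (z 1) (-2)) * coeffL (w i) n := by
      intro i n
      have : (z - (2 * coeffL (z 1) (-2)) • w) i
          = z i - (2 * coeffL (z 1) (-2)) • w i := rfl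
      rw [this, coeffL_sub, coeffL_smul]
    refine ⟨?_, ?_, ?_, ?_, ?_, ?_, ?_, ?_, ?_⟩
    · intro n h1 h2; rw [hsub]; simp only [cw0]
      interval_cases n
      · norm_num; linear_combination hA3
      · norm_num; linear_combination hA2
      · norm_num; linear_combination hA1
    · intro n h1 h2; rw [hsub]; simp only [cw1]
      interval_cases n
      · norm_num; linear_combination hB3
      · norm_num; ring
      · norm_num; linear_combination hB1
    · intro n h1 h2; rw [hsub]; simp only [cw2]
      interval_cases n
      · norm_num; linear_combination hC3
      · norm_num; linear_combination hC2
      · norm_num; linear_combination hC1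
    · intro n h1 h2; rw [hsub]; simp only [cw3]
      interval_cases n
      · norm_num; linear_combination hP4
      · norm_num; linear_combination hP3
      · norm_num; linear_combination hP2
      · norm_num; linear_combination hP1
    · intro n h1 h2; rw [hsub]; simp only [cw4]
      interval_cases n
      · norm_num; linear_combination hQ4
      · norm_num; linear_combination hQ3
      · norm_num; linear_combination hQ2
      · norm_num; linear_combination hQ1
    · intro n h1 h2; rw [hsub]; simp only [cw5]
      interval_cases n
      · norm_num; linear_combination hR4
      · norm_num; linear_combination hR3
      · norm_num; linear_combination hR2
      · norm_num; linear_combination hR1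
    · rw [hsub, hsub]; simp only [cw3, cw2]; norm_num; linear_combination hP5
    · rw [hsub, hsub]; simp only [cw4, cw1]; norm_num; linear_combination hQ5
    · rw [hsub, hsub]; simp only [cw5, cw0]; norm_num; linear_combination hR5
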